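/- For all indices 1 ≤ i < j ≤ n+1 and every nonterminal A of G: some pair (A, u) belongs to M(i,j) if and only if there exists a string t' ∈ Σ* with A ⇒* t' in G and d_ed(s_i^{j−1}, t') ≤ R. -/

import Mathlib

/-- A scored production of a grammar: a left-hand-side nonterminal, a right-hand-side
string of nonterminals and terminals, and a score (edit cost). -/
structure ScoredProd (N : Type*) (T : Type*) where
  lhs : N
  rhs : List (N ⊕ T)
  score : ℕ

/-- `ScoredDerives P u v c` : from the sentential form `u` one can derive the sentential
form `v` using productions from `P` whose scores sum to `c`. -/
inductive ScoredDerives {N T : Type*} (P : Set (ScoredProd N T)) :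
    List (N ⊕ T) → List (N ⊕ T) → ℕ → Prop
  | refl (w : List (N ⊕ T)) : ScoredDerives P w w 0
  | step {u l r : List (N ⊕ T)} {p : ScoredProd N T} {c : ℕ} :
      ScoredDerives P u (l ++ [Sum.inl p.lhs] ++ r) c → p ∈ P →
      ScoredDerives P u (l ++ p.rhs ++ r) (c + p.score)

/-- A context-free grammar in Chomsky normal form: binary rules `A → BC`,
terminal rules `A → a`, and possibly the rule `S → ε` (recorded by `eps`). -/
structure CNF (N : Type*) (T : Type*) where
  start : N
  bin : Set (N × N × N)
  term : Set (N × T)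
  eps : Prop

/-- The productions of the CNF grammar `G`, all of score `0`. -/
def CNF.prods {N T : Type*} (G : CNF N T) : Set (ScoredProd N T) :=
  {p | (∃ A B C, (A, B, C) ∈ G.bin ∧ p = ⟨A, [Sum.inl B, Sum.inl C], 0⟩) ∨
       (∃ A a, (A, a) ∈ G.term ∧ p = ⟨A, [Sum.inr a], 0⟩) ∨
       (G.eps ∧ p = ⟨G.start, [], 0⟩)}

/-- Lift a production of `G` to the augmented grammar `G_e`, whose nonterminals are
`N ⊕ Unit` (with `Sum.inr ()` playing the role of the fresh nonterminal `I`). -/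
def liftProd {N T : Type*} (p : ScoredProd N T) : ScoredProd (N ⊕ Unit) T :=
  ⟨Sum.inl p.lhs, p.rhs.map (Sum.map Sum.inl id), p.score⟩

/-- The productions of the augmented grammar `G_e`: the original productions of `G`
(score 0), elementary substitution rules `A → y` of score 1 (for `A` having some
terminal rule and `y` with `A → y ∉ P`), elementary insertion rules `I → x` of score 1,
rules `A → IA`, `A → AI` of score 0, `I → II` of score 0, and elementary deletion rules
`A → ε` of score 1 for every terminal rule `A → x` of `G`. -/
def CNF.augProds {N T : Type*} (G : CNF N T) : Set (ScoredProd (N ⊕ Unit) T) :=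
  (liftProd '' G.prods) ∪
  {p | ∃ A y, (∃ x, (A, x) ∈ G.term) ∧ (A, y) ∉ G.term ∧
        p = ⟨Sum.inl A, [Sum.inr y], 1⟩} ∪
  {p | ∃ x, p = ⟨Sum.inr (), [Sum.inr x], 1⟩} ∪
  {p | ∃ A : N, p = ⟨Sum.inl A, [Sum.inl (Sum.inr ()), Sum.inl (Sum.inl A)], 0⟩ ∨
                p = ⟨Sum.inl A, [Sum.inl (Sum.inl A), Sum.inl (Sum.inr ())], 0⟩} ∪
  {(⟨Sum.inr (), [Sum.inl (Sum.inr ()), Sum.inl (Sum.inr ())], 0⟩ : ScoredProd (N ⊕ Unit) T)} ∪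
  {p | ∃ A x, (A, x) ∈ G.term ∧ p = ⟨Sum.inl A, [], 1⟩}

/-- `A ⇒* s` in the grammar `G`. -/
def CNF.Derives {N T : Type*} (G : CNF N T) (A : N) (s : List T) : Prop :=
  ∃ u, ScoredDerives G.prods [Sum.inl A] (s.map Sum.inr) u

/-- The language of `G`. -/
def CNF.lang {N T : Type*} (G : CNF N T) : Set (List T) := {s | G.Derives G.start s}

/-- `A ⇒* s` in the augmented grammar `G_e` with a derivation of score exactly `u`. -/
def CNF.augDerives {N T : Type*} (G : CNF N T) (A : N ⊕ Unit) (s : List T) (u : ℕ) : Prop :=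
  ScoredDerives G.augProds [Sum.inl A] (s.map Sum.inr) u

/-- Unit-cost Levenshtein distance (replaces Mathlib's removed
`levenshtein Levenshtein.defaultCost`, by its defining recursion). -/
def levenshteinUnit {T : Type*} [DecidableEq T] : List T → List T → ℕ
  | [], ys => ys.length
  | x :: xs, [] => 1 + levenshteinUnit xs []
  | x :: xs, y :: ys =>
      min (1 + levenshteinUnit xs (y :: ys))
        (min (1 + levenshteinUnit (x :: xs) ys)
          ((if x = y then 0 else 1) + levenshteinUnit xs ys))
termination_by xs ys => xs.length + ys.length

/-- The standard (unit-cost) string edit distance. -/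
def editDist {T : Type*} [DecidableEq T] (s t : List T) : ℕ :=
  levenshteinUnit s t

/-- The language edit distance `d_G(G,s) = min_{z ∈ L(G)} d_ed(s,z)`. -/
noncomputable def dG {N T : Type*} [DecidableEq T] (G : CNF N T) (s : List T) : ℕ :=
  sInf {d | ∃ z ∈ G.lang, editDist s z = d}


/-- The substring `s_i^{j-1} = s_i s_{i+1} ... s_{j-1}` (1-based indices). -/
def subStr {T : Type*} (s : List T) (i j : ℕ) : List T := (s.drop (i - 1)).take (j - i)

/-- The candidate entries generated by the construction of the matrix `M`:
(base) `(A, σ) ∈ M(i, i+1)` whenever `A → s_i` is a production of `G_e` of score `σ`;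
(combination) if `(B,u) ∈ M(i,j)`, `(C,v) ∈ M(j,k)` and `A → BC` is a production of `G_e`,
then `(A, u+v)` is a candidate for `M(i,k)`;
(ε-absorption) if `(B,u) ∈ M(i,j)`, `A → CB` (resp. `A → BC`) is a production of `G_e`, and
`C ⇒* ε` in `G_e` with a derivation of score `v`, then `(A, u+v)` is a candidate for `M(i,j)`. -/
inductive Cand {N T : Type*} (G : CNF N T) (s : List T) :
    ℕ → ℕ → (N ⊕ Unit) → ℕ → Prop
  | base {i : ℕ} {A : N ⊕ Unit} {σ : ℕ} {a : T} :
      1 ≤ i → i ≤ s.length → s[i - 1]? = some a →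
      (⟨A, [Sum.inr a], σ⟩ : ScoredProd (N ⊕ Unit) T) ∈ G.augProds →
      Cand G s i (i + 1) A σ
  | comb {i j k : ℕ} {A B C : N ⊕ Unit} {u v sc : ℕ} :
      Cand G s i j B u → Cand G s j k C v →
      (⟨A, [Sum.inl B, Sum.inl C], sc⟩ : ScoredProd (N ⊕ Unit) T) ∈ G.augProds →
      Cand G s i k A (u + v)
  | epsL {i j : ℕ} {A B C : N ⊕ Unit} {u v sc : ℕ} :
      Cand G s i j B u →
      (⟨A, [Sum.inl C, Sum.inl B], sc⟩ : ScoredProd (N ⊕ Unit) T) ∈ G.augProds →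
      ScoredDerives G.augProds [Sum.inl C] [] v →
      Cand G s i j A (u + v)
  | epsR {i j : ℕ} {A B C : N ⊕ Unit} {u v sc : ℕ} :
      Cand G s i j B u →
      (⟨A, [Sum.inl B, Sum.inl C], sc⟩ : ScoredProd (N ⊕ Unit) T) ∈ G.augProds →
      ScoredDerives G.augProds [Sum.inl C] [] v →
      Cand G s i j A (u + v)

/-- The entry `M(i,j)` of the matrix `M`: among all candidates, for each nonterminal only
the pair of minimum score is kept, and pairs of score exceeding `R` are discarded. -/
def Mmat {N T : Type*} (G : CNF N T) (s : List T) (R i j : ℕ) : Set ((N ⊕ Unit) × ℕ) :=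
  {q | Cand G s i j q.1 q.2 ∧ q.2 ≤ R ∧ ∀ v, Cand G s i j q.1 v → q.2 ≤ v}

section EditLemmas
variable {T : Type*} [DecidableEq T]

theorem editDist_nil_left (t : List T) : editDist [] t = t.length := by
  induction t with
  | nil => simp [editDist, levenshteinUnit]
  | cons a t ih => simp [editDist, levenshteinUnit] at ih ⊢ <;> omega

theorem editDist_nil_right (w : List T) : editDist w [] = w.length := by
  induction w with
  | nil => simp [editDist, levenshteinUnit]
  | cons a w ih => simp [editDist, levenshteinUnit] at ih ⊢ <;> omega

theorem editDist_cons_cons (x : T) (w : List T) (y : T) (t : List T) :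
    editDist (x :: w) (y :: t) =
      min (1 + editDist w (y :: t))
        (min (1 + editDist (x :: w) t) ((if x = y then 0 else 1) + editDist w t)) := by
  simp only [editDist]; rw [levenshteinUnit.eq_3]

theorem editDist_le_cons_left (x : T) (w t : List T) :
    editDist (x :: w) t ≤ 1 + editDist w t := by
  cases t with
  | nil => rw [editDist_nil_right, editDist_nil_right]; simp only [List.length_cons]; omega
  | cons y t => rw [editDist_cons_cons]; exact min_le_left _ _

theorem editDist_le_cons_right (w : List T) (y : T) (t : List T) :
    editDist w (y :: t) ≤ 1 + editDist w t := by
  cases w with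
  | nil => rw [editDist_nil_left, editDist_nil_left]; simp only [List.length_cons]; omega
  | cons x w =>
      rw [editDist_cons_cons]
      exact le_trans (min_le_right _ _) (min_le_left _ _)

theorem editDist_append_left_le (w1 w2 t : List T) :
    editDist (w1 ++ w2) t ≤ w1.length + editDist w2 t := by
  induction w1 with
  | nil => simp
  | cons x w1 ih =>
      have h := editDist_le_cons_left x (w1 ++ w2) t
      simp only [List.cons_append, List.length_cons] at *
      omega

theorem editDist_append_right_le (t1 w t2 : List T) :
    editDist w (t1 ++ t2) ≤ t1.length + editDist w t2 := by
  induction t1 with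
  | nil => simp
  | cons y t1 ih =>
      have h := editDist_le_cons_right w y (t1 ++ t2)
      simp only [List.cons_append, List.length_cons] at *
      omega

theorem editDist_append_le (w1 w2 t1 t2 : List T) :
    editDist (w1 ++ w2) (t1 ++ t2) ≤ editDist w1 t1 + editDist w2 t2 := by
  induction t1 generalizing w1 with
  | nil =>
      simp only [List.nil_append]
      rw [editDist_nil_right]
      exact editDist_append_left_le _ _ _
  | cons y t1 iht =>
      induction w1 with
      | nil =>
          simp only [List.nil_append]
          rw [editDist_nil_left]
          exact editDist_append_right_le _ _ _
      | cons x w1 ihw =>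
          simp only [List.cons_append]
          rw [editDist_cons_cons, editDist_cons_cons]
          have h1 : editDist (w1 ++ w2) (y :: (t1 ++ t2)) ≤
              editDist w1 (y :: t1) + editDist w2 t2 := by
            simpa using ihw
          have h2 : editDist (x :: (w1 ++ w2)) (t1 ++ t2) ≤
              editDist (x :: w1) t1 + editDist w2 t2 := by
            simpa using iht (x :: w1)
          have h3 : editDist (w1 ++ w2) (t1 ++ t2) ≤ editDist w1 t1 + editDist w2 t2 :=
            iht w1
          omega

theorem editDist_split (t1 : List T) : ∀ (w t2 : List T),
    ∃ k ≤ w.length, editDist (w.take k) t1 + editDist (w.drop k) t2 ≤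
      editDist w (t1 ++ t2) := by
  induction t1 with
  | nil =>
      intro w t2
      refine ⟨0, by omega, ?_⟩
      simp [editDist_nil_left]
  | cons y t1 iht =>
      intro w t2
      induction w with
      | nil =>
          refine ⟨0, by omega, ?_⟩
          simp only [List.take_nil, List.drop_nil]
          rw [editDist_nil_left, editDist_nil_left, editDist_nil_left]
          simp only [List.length_cons, List.length_append]
          omega
      | cons x w ihw =>
          simp only [List.cons_append]
          rw [editDist_cons_cons]
          rcases min_choice (1 + editDist w (y :: (t1 ++ t2)))
              (min (1 + editDist (x :: w) (t1 ++ t2))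
                ((if x = y then 0 else 1) + editDist w (t1 ++ t2))) with h | h <;> rw [h]
          · obtain ⟨k, hk, hle⟩ := by simpa only [List.cons_append] using ihw
            refine ⟨k + 1, by simpa using Nat.succ_le_succ hk, ?_⟩
            simp only [List.take_succ_cons, List.drop_succ_cons]
            have := editDist_le_cons_left x (w.take k) (y :: t1)
            omega
          · rcases min_choice (1 + editDist (x :: w) (t1 ++ t2))
                ((if x = y then 0 else 1) + editDist w (t1 ++ t2)) with h' | h' <;> rw [h']
            · obtain ⟨k, hk, hle⟩ := iht (x :: w) t2
              refine ⟨k, hk, ?_⟩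
              have := editDist_le_cons_right ((x :: w).take k) y t1
              omega
            · obtain ⟨k, hk, hle⟩ := iht w t2
              refine ⟨k + 1, by simpa using Nat.succ_le_succ hk, ?_⟩
              simp only [List.take_succ_cons, List.drop_succ_cons]
              have hsub : editDist (x :: w.take k) (y :: t1) ≤
                  (if x = y then 0 else 1) + editDist (w.take k) t1 := by
                rw [editDist_cons_cons]
                exact le_trans (min_le_right _ _) (min_le_right _ _)
              omega

theorem length_le_editDist (t : List T) : ∀ w : List T,
    w.length ≤ t.length + editDist w t := by
  induction t with
  | nil => intro w; rw [editDist_nil_right]; simp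
  | cons y t iht =>
      intro w
      induction w with
      | nil => simp
      | cons x w ihw =>
          rw [editDist_cons_cons]
          have h1 := iht (x :: w)
          have h2 := iht w
          simp only [List.length_cons] at *
          omega

theorem length_le_editDist_single {a : T} {w : List T} (h : a ∉ w) :
    w.length ≤ editDist w [a] := by
  induction w with
  | nil => simp
  | cons x w ih =>
      simp only [List.mem_cons, not_or] at h
      obtain ⟨hxa, haw⟩ := h
      rw [editDist_cons_cons]
      have h1 : editDist (x :: w) [] = w.length + 1 := by
        rw [editDist_nil_right]; simp
      have h2 : editDist w ([] : List T) = w.length := editDist_nil_right w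
      have h3 : (if x = a then 0 else 1) = 1 := if_neg (fun hc => hxa hc.symm)
      have h4 := ih haw
      rw [h3]
      simp only [List.length_cons]
      omega

theorem editDist_single_single_le (x a : T) : editDist [x] [a] ≤ 1 := by
  rw [editDist_cons_cons]
  refine le_trans (le_trans (min_le_right _ _) (min_le_right _ _)) ?_
  rw [editDist_nil_right]
  split <;> simp

theorem editDist_single_single_self (a : T) : editDist [a] ([a] : List T) = 0 := by
  refine Nat.le_antisymm ?_ (Nat.zero_le _)
  rw [editDist_cons_cons]
  refine le_trans (le_trans (min_le_right _ _) (min_le_right _ _)) ?_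
  rw [editDist_nil_right]
  simp

end EditLemmas
section DerivMachinery
variable {N T : Type*} {P : Set (ScoredProd N T)}

theorem ScoredDerives.trans {u v w : List (N ⊕ T)} {c d : ℕ}
    (h1 : ScoredDerives P u v c) (h2 : ScoredDerives P v w d) :
    ScoredDerives P u w (c + d) := by
  induction h2 with
  | refl => simpa using h1
  | step h hp ih =>
      rw [← Nat.add_assoc]
      exact ScoredDerives.step ih hp

theorem ScoredDerives.context (l r : List (N ⊕ T)) {u v : List (N ⊕ T)} {c : ℕ}
    (h : ScoredDerives P u v c) :
    ScoredDerives P (l ++ u ++ r) (l ++ v ++ r) c := by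
  induction h with
  | refl => exact .refl _
  | @step l' r' p c' h hp ih =>
      have h2 := ScoredDerives.step (l := l ++ l') (r := r' ++ r) (p := p)
        (by simpa [List.append_assoc] using ih) hp
      simpa [List.append_assoc] using h2

theorem ScoredDerives.single {p : ScoredProd N T} (hp : p ∈ P) :
    ScoredDerives P [Sum.inl p.lhs] p.rhs p.score := by
  have h := ScoredDerives.step (l := []) (r := [])
    (ScoredDerives.refl (P := P) ([] ++ [Sum.inl p.lhs] ++ [])) hp
  simpa using h

theorem ScoredDerives.appendD {u1 v1 u2 v2 : List (N ⊕ T)} {c1 c2 : ℕ}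
    (h1 : ScoredDerives P u1 v1 c1) (h2 : ScoredDerives P u2 v2 c2) :
    ScoredDerives P (u1 ++ u2) (v1 ++ v2) (c1 + c2) := by
  have a1 := ScoredDerives.context [] u2 h1
  have a2 := ScoredDerives.context v1 [] h2
  exact ScoredDerives.trans (by simpa using a1) (by simpa using a2)

/-- Step-counted version of `ScoredDerives`. -/
inductive DerN (P : Set (ScoredProd N T)) :
    List (N ⊕ T) → List (N ⊕ T) → ℕ → ℕ → Prop
  | refl (w : List (N ⊕ T)) : DerN P w w 0 0
  | step {u l r : List (N ⊕ T)} {p : ScoredProd N T} {c n : ℕ} :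
      DerN P u (l ++ [Sum.inl p.lhs] ++ r) c n → p ∈ P →
      DerN P u (l ++ p.rhs ++ r) (c + p.score) (n + 1)

theorem ScoredDerives.toDerN {u v : List (N ⊕ T)} {c : ℕ}
    (h : ScoredDerives P u v c) : ∃ n, DerN P u v c n := by
  induction h with
  | refl => exact ⟨0, .refl _⟩
  | step h hp ih => obtain ⟨n, hn⟩ := ih; exact ⟨n + 1, .step hn hp⟩

theorem DerN.toScored {u v : List (N ⊕ T)} {c n : ℕ}
    (h : DerN P u v c n) : ScoredDerives P u v c := by
  induction h with
  | refl => exact .refl _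
  | step h hp ih => exact .step ih hp

theorem DerN.rigid {t : List T} {v : List (N ⊕ T)} {c n : ℕ}
    (h : DerN P (t.map Sum.inr) v c n) : v = t.map Sum.inr ∧ c = 0 := by
  induction h with
  | refl => exact ⟨rfl, rfl⟩
  | @step l r p c' n' h hp ih =>
      exfalso
      have hm : (Sum.inl p.lhs : N ⊕ T) ∈ List.map Sum.inr t := by
        rw [← ih.1]; simp
      simp at hm

theorem ScoredDerives.rigid {t : List T} {v : List (N ⊕ T)} {c : ℕ}
    (h : ScoredDerives P (t.map Sum.inr) v c) : v = t.map Sum.inr ∧ c = 0 := by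
  obtain ⟨n, hn⟩ := h.toDerN
  exact hn.rigid

theorem append_eq_append_single {X : Type*} {l r v1 v2 : List X} {x : X}
    (h : v1 ++ v2 = l ++ [x] ++ r) :
    (∃ r1, v1 = l ++ [x] ++ r1 ∧ r = r1 ++ v2) ∨
    (∃ l2, v2 = l2 ++ [x] ++ r ∧ l = v1 ++ l2) := by
  rcases List.append_eq_append_iff.mp h with ⟨a, ha1, ha2⟩ | ⟨a, ha1, ha2⟩
  · -- l ++ [x] = v1 ++ a, v2 = a ++ r
    rcases a.eq_nil_or_concat with rfl | ⟨a', y, rfl⟩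
    · left
      have hv1 : v1 = l ++ [x] := by simpa using ha1.symm
      have hr : r = v2 := by simpa using ha2.symm
      exact ⟨[], by simp [hv1], by simp [hr]⟩
    · simp only [List.concat_eq_append] at ha1 ha2
      rw [← List.append_assoc] at ha1
      have hlen : (l).length = (v1 ++ a').length := by
        have := congrArg List.length ha1; simp at this ⊢; omega
      obtain ⟨h3, h4⟩ := List.append_inj ha1 (by simpa using hlen)
      have hyx : y = x := by simpa using h4.symm
      right
      refine ⟨a', ?_, h3⟩
      rw [ha2, hyx]
  · -- v1 = (l ++ [x]) ++ a, r = a ++ v2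
    left
    exact ⟨a, by simp [ha1], ha2⟩

theorem DerN.split {α β v : List (N ⊕ T)} {c n : ℕ}
    (h : DerN P (α ++ β) v c n) :
    ∃ v1 v2 c1 c2 n1 n2, v = v1 ++ v2 ∧ c = c1 + c2 ∧ n1 + n2 = n ∧
      DerN P α v1 c1 n1 ∧ DerN P β v2 c2 n2 := by
  have key : ∀ γ v c n, DerN P γ v c n → ∀ α β, γ = α ++ β →
      ∃ v1 v2 c1 c2 n1 n2, v = v1 ++ v2 ∧ c = c1 + c2 ∧ n1 + n2 = n ∧
        DerN P α v1 c1 n1 ∧ DerN P β v2 c2 n2 := by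
    intro γ v c n h
    induction h with
    | refl =>
        intro α β hab
        exact ⟨α, β, 0, 0, 0, 0, hab, rfl, rfl, .refl _, .refl _⟩
    | @step l r p c' n' h hp ih =>
        intro α β hab
        obtain ⟨v1, v2, c1, c2, n1, n2, hv, hc, hn, d1, d2⟩ := ih α β hab
        rcases append_eq_append_single hv.symm with ⟨r1, hv1, hr⟩ | ⟨l2, hv2, hl⟩
        · refine ⟨l ++ p.rhs ++ r1, v2, c1 + p.score, c2, n1 + 1, n2, ?_, by omega, by omega,
            DerN.step (hv1 ▸ d1) hp, d2⟩
          rw [hr]; simp [List.append_assoc]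
        · refine ⟨v1, l2 ++ p.rhs ++ r, c1, c2 + p.score, n1, n2 + 1, ?_, by omega, by omega,
            d1, DerN.step (hv2 ▸ d2) hp⟩
          rw [hl]; simp [List.append_assoc]
  exact key _ _ _ _ h α β rfl

theorem DerN.head {A : N} {v : List (N ⊕ T)} {c n : ℕ}
    (h : DerN P [Sum.inl A] v c n) :
    (v = [Sum.inl A] ∧ c = 0 ∧ n = 0) ∨
    ∃ p ∈ P, p.lhs = A ∧ ∃ c' n', DerN P p.rhs v c' n' ∧ c = p.score + c' ∧ n = n' + 1 := by
  have key : ∀ γ v c n, DerN P γ v c n → ∀ A : N, γ = [Sum.inl A] →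
      (v = [Sum.inl A] ∧ c = 0 ∧ n = 0) ∨
      ∃ p ∈ P, p.lhs = A ∧ ∃ c' n', DerN P p.rhs v c' n' ∧ c = p.score + c' ∧ n = n' + 1 := by
    intro γ v c n h
    induction h with
    | refl => intro A hA; left; exact ⟨hA, rfl, rfl⟩
    | @step l r p c' n' h hp ih =>
        intro A hA
        rcases ih A hA with ⟨hv, hc, hn⟩ | ⟨p0, hp0, hlhs, c'', n'', d, hc, hn⟩
        · rcases l with _ | ⟨a, l⟩
          · rw [List.nil_append] at hv
            have hv' : Sum.inl p.lhs :: r = [Sum.inl A] := by simpa using hv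
            injection hv' with h1 h2
            injection h1 with h1
            subst h1; subst h2
            right
            refine ⟨p, hp, rfl, 0, 0, by simpa using DerN.refl p.rhs, by omega, by omega⟩
          · exfalso
            have hv' : a :: (l ++ [Sum.inl p.lhs] ++ r) = [Sum.inl A] := by simpa using hv
            injection hv' with h1 h2
            have := congrArg List.length h2
            simp at this
        · right
          exact ⟨p0, hp0, hlhs, c'' + p.score, n'' + 1, DerN.step d hp, by omega, by omega⟩
  exact key _ _ _ _ h A rfl

end DerivMachinery
section GrammarLemmas
variable {N T : Type*} (G : CNF N T)

theorem mem_aug_bin {A B C : N} (h : (A, B, C) ∈ G.bin) :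
    (⟨Sum.inl A, [Sum.inl (Sum.inl B), Sum.inl (Sum.inl C)], 0⟩ :
      ScoredProd (N ⊕ Unit) T) ∈ G.augProds := by
  refine Or.inl (Or.inl (Or.inl (Or.inl (Or.inl ⟨⟨A, [Sum.inl B, Sum.inl C], 0⟩, ?_, rfl⟩))))
  exact Or.inl ⟨A, B, C, h, rfl⟩

theorem mem_aug_term {A : N} {a : T} (h : (A, a) ∈ G.term) :
    (⟨Sum.inl A, [Sum.inr a], 0⟩ : ScoredProd (N ⊕ Unit) T) ∈ G.augProds := by
  refine Or.inl (Or.inl (Or.inl (Or.inl (Or.inl ⟨⟨A, [Sum.inr a], 0⟩, ?_, rfl⟩))))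
  exact Or.inr (Or.inl ⟨A, a, h, rfl⟩)

theorem mem_aug_eps (h : G.eps) :
    (⟨Sum.inl G.start, [], 0⟩ : ScoredProd (N ⊕ Unit) T) ∈ G.augProds := by
  refine Or.inl (Or.inl (Or.inl (Or.inl (Or.inl ⟨⟨G.start, [], 0⟩, ?_, rfl⟩))))
  exact Or.inr (Or.inr ⟨h, rfl⟩)

theorem mem_aug_subst {A : N} {y : T} (hx : ∃ x, (A, x) ∈ G.term) (hy : (A, y) ∉ G.term) :
    (⟨Sum.inl A, [Sum.inr y], 1⟩ : ScoredProd (N ⊕ Unit) T) ∈ G.augProds :=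
  Or.inl (Or.inl (Or.inl (Or.inl (Or.inr ⟨A, y, hx, hy, rfl⟩))))

theorem mem_aug_ins (x : T) :
    (⟨Sum.inr (), [Sum.inr x], 1⟩ : ScoredProd (N ⊕ Unit) T) ∈ G.augProds :=
  Or.inl (Or.inl (Or.inl (Or.inr ⟨x, rfl⟩)))

theorem mem_aug_IA (A : N) :
    (⟨Sum.inl A, [Sum.inl (Sum.inr ()), Sum.inl (Sum.inl A)], 0⟩ :
      ScoredProd (N ⊕ Unit) T) ∈ G.augProds :=
  Or.inl (Or.inl (Or.inr ⟨A, Or.inl rfl⟩))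

theorem mem_aug_AI (A : N) :
    (⟨Sum.inl A, [Sum.inl (Sum.inl A), Sum.inl (Sum.inr ())], 0⟩ :
      ScoredProd (N ⊕ Unit) T) ∈ G.augProds :=
  Or.inl (Or.inl (Or.inr ⟨A, Or.inr rfl⟩))

theorem mem_aug_III :
    (⟨Sum.inr (), [Sum.inl (Sum.inr ()), Sum.inl (Sum.inr ())], 0⟩ :
      ScoredProd (N ⊕ Unit) T) ∈ G.augProds :=
  Or.inl (Or.inr rfl)

theorem mem_aug_del {A : N} {x : T} (h : (A, x) ∈ G.term) :
    (⟨Sum.inl A, [], 1⟩ : ScoredProd (N ⊕ Unit) T) ∈ G.augProds :=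
  Or.inr ⟨A, x, h, rfl⟩

theorem aug_classify {p : ScoredProd (N ⊕ Unit) T} (hp : p ∈ G.augProds) :
    (∃ A B C, (A, B, C) ∈ G.bin ∧
      p = ⟨Sum.inl A, [Sum.inl (Sum.inl B), Sum.inl (Sum.inl C)], 0⟩) ∨
    (∃ A a, (A, a) ∈ G.term ∧ p = ⟨Sum.inl A, [Sum.inr a], 0⟩) ∨
    (G.eps ∧ p = ⟨Sum.inl G.start, [], 0⟩) ∨
    (∃ A y, (∃ x, (A, x) ∈ G.term) ∧ (A, y) ∉ G.term ∧ p = ⟨Sum.inl A, [Sum.inr y], 1⟩) ∨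
    (∃ x, p = ⟨Sum.inr (), [Sum.inr x], 1⟩) ∨
    (∃ A : N, p = ⟨Sum.inl A, [Sum.inl (Sum.inr ()), Sum.inl (Sum.inl A)], 0⟩) ∨
    (∃ A : N, p = ⟨Sum.inl A, [Sum.inl (Sum.inl A), Sum.inl (Sum.inr ())], 0⟩) ∨
    (p = ⟨Sum.inr (), [Sum.inl (Sum.inr ()), Sum.inl (Sum.inr ())], 0⟩) ∨
    (∃ A x, (A, x) ∈ G.term ∧ p = ⟨Sum.inl A, [], 1⟩) := by
  rcases hp with ((((hp | hp) | hp) | hp) | hp) | hp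
  · obtain ⟨q, hq, rfl⟩ := hp
    rcases hq with ⟨A, B, C, h, rfl⟩ | ⟨A, a, h, rfl⟩ | ⟨h, rfl⟩
    · exact Or.inl ⟨A, B, C, h, rfl⟩
    · exact Or.inr (Or.inl ⟨A, a, h, rfl⟩)
    · exact Or.inr (Or.inr (Or.inl ⟨h, rfl⟩))
  · obtain ⟨A, y, hx, hy, rfl⟩ := hp
    exact Or.inr (Or.inr (Or.inr (Or.inl ⟨A, y, hx, hy, rfl⟩)))
  · obtain ⟨x, rfl⟩ := hp
    exact Or.inr (Or.inr (Or.inr (Or.inr (Or.inl ⟨x, rfl⟩))))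
  · obtain ⟨A, rfl | rfl⟩ := hp
    · exact Or.inr (Or.inr (Or.inr (Or.inr (Or.inr (Or.inl ⟨A, rfl⟩)))))
    · exact Or.inr (Or.inr (Or.inr (Or.inr (Or.inr (Or.inr (Or.inl ⟨A, rfl⟩))))))
  · exact Or.inr (Or.inr (Or.inr (Or.inr (Or.inr (Or.inr (Or.inr (Or.inl hp)))))))
  · obtain ⟨A, x, h, rfl⟩ := hp
    exact Or.inr (Or.inr (Or.inr (Or.inr (Or.inr (Or.inr (Or.inr (Or.inr ⟨A, x, h, rfl⟩)))))))

/-- Weight of a symbol of the augmented grammar: `1` for the fresh nonterminal `I`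
and for terminals, `0` for original nonterminals. -/
def symWt : (N ⊕ Unit) ⊕ T → ℕ
  | Sum.inl (Sum.inr _) => 1
  | Sum.inr _ => 1
  | Sum.inl (Sum.inl _) => 0

theorem wt_mono {u v : List ((N ⊕ Unit) ⊕ T)} {c : ℕ}
    (h : ScoredDerives G.augProds u v c) :
    (u.map symWt).sum ≤ (v.map symWt).sum := by
  induction h with
  | refl => exact le_rfl
  | @step l r p c' h hp ih =>
      refine le_trans ih ?_
      simp only [List.map_append, List.sum_append]
      have hkey : symWt (Sum.inl p.lhs : (N ⊕ Unit) ⊕ T) ≤ (p.rhs.map symWt).sum := by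
        rcases aug_classify G hp with ⟨A,B,C,_,rfl⟩ | ⟨A,a,_,rfl⟩ | ⟨_,rfl⟩ | ⟨A,y,_,_,rfl⟩ |
          ⟨x,rfl⟩ | ⟨A,rfl⟩ | ⟨A,rfl⟩ | rfl | ⟨A,x,_,rfl⟩ <;> simp [symWt]
      simp only [List.map_cons, List.map_nil, List.sum_cons, List.sum_nil] at *
      omega

theorem I_not_eps {v : ℕ} :
    ¬ ScoredDerives G.augProds [Sum.inl (Sum.inr ())] ([] : List ((N ⊕ Unit) ⊕ T)) v := by
  intro h
  have := wt_mono G h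
  simp [symWt] at this

theorem derives_term {A : N} {a : T} (h : (A, a) ∈ G.term) : G.Derives A [a] := by
  refine ⟨0, ?_⟩
  simpa using ScoredDerives.single (p := ⟨A, [Sum.inr a], 0⟩) (Or.inr (Or.inl ⟨A, a, h, rfl⟩))

theorem derives_eps_rule (h : G.eps) : G.Derives G.start [] := by
  refine ⟨0, ?_⟩
  simpa using ScoredDerives.single (p := ⟨G.start, [], 0⟩) (Or.inr (Or.inr ⟨h, rfl⟩))

theorem derives_bin {A B C : N} {t1 t2 : List T} (h : (A, B, C) ∈ G.bin)
    (h1 : G.Derives B t1) (h2 : G.Derives C t2) : G.Derives A (t1 ++ t2) := by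
  obtain ⟨u1, hd1⟩ := h1
  obtain ⟨u2, hd2⟩ := h2
  refine ⟨0 + (u1 + u2), ?_⟩
  have hstep : ScoredDerives G.prods [Sum.inl A] [Sum.inl B, Sum.inl C] 0 := by
    simpa using ScoredDerives.single (p := ⟨A, [Sum.inl B, Sum.inl C], 0⟩)
      (Or.inl ⟨A, B, C, h, rfl⟩)
  have happ := ScoredDerives.appendD hd1 hd2
  have : ScoredDerives G.prods ([Sum.inl B] ++ [Sum.inl C])
      (t1.map Sum.inr ++ t2.map Sum.inr) (u1 + u2) := happ
  rw [← List.map_append] at this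
  exact ScoredDerives.trans hstep this

/-- Any string derivable in `G` can be fully deleted in `G_e`, with score at most
its length. -/
theorem del_deriv : ∀ n, ∀ {A : N} {t : List T} {c : ℕ},
    DerN G.prods [Sum.inl A] (t.map Sum.inr) c n →
    ∃ v ≤ t.length, ScoredDerives G.augProds [Sum.inl (Sum.inl A)] [] v := by
  intro n
  induction n using Nat.strong_induction_on with
  | _ n ih =>
    intro A t c h
    rcases h.head with ⟨hv, -, -⟩ | ⟨p, hp, hlhs, c', n', d, hc, hn⟩
    · exfalso
      cases t with
      | nil => simp at hv
      | cons a t => simp at hv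
    · rcases hp with ⟨A', B, C, hbin, rfl⟩ | ⟨A', a, hterm, rfl⟩ | ⟨heps, rfl⟩
      · -- binary rule
        obtain rfl : A' = A := hlhs
        have d' : DerN G.prods ([Sum.inl B] ++ [Sum.inl C]) (t.map Sum.inr) c' n' := d
        obtain ⟨v1, v2, c1, c2, n1, n2, hv, hcc, hnn, d1, d2⟩ := d'.split
        obtain ⟨t1, t2, rfl, rfl, rfl⟩ : ∃ t1 t2, t = t1 ++ t2 ∧
            v1 = t1.map Sum.inr ∧ v2 = t2.map Sum.inr := by
          rcases List.map_eq_append_iff.mp hv with ⟨t1, t2, rfl, h1, h2⟩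
          exact ⟨t1, t2, rfl, h1.symm, h2.symm⟩
        obtain ⟨w1, hw1, e1⟩ := ih n1 (by omega) d1
        obtain ⟨w2, hw2, e2⟩ := ih n2 (by omega) d2
        refine ⟨w1 + w2, by simp; omega, ?_⟩
        have hstep : ScoredDerives G.augProds [Sum.inl (Sum.inl A')]
            [Sum.inl (Sum.inl B), Sum.inl (Sum.inl C)] 0 := by
          simpa using ScoredDerives.single (p := ⟨Sum.inl A',
            [Sum.inl (Sum.inl B), Sum.inl (Sum.inl C)], 0⟩) (mem_aug_bin G hbin)
        have happ := ScoredDerives.appendD e1 e2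
        simpa using ScoredDerives.trans hstep happ
      · -- terminal rule
        obtain rfl : A' = A := hlhs
        have d' : DerN G.prods (([a] : List T).map Sum.inr) (t.map Sum.inr) c' n' := d
        have ht : t = [a] := by
          have h2 := d'.rigid
          exact List.map_injective_iff.mpr Sum.inr_injective h2.1
        refine ⟨1, by simp [ht], ?_⟩
        simpa using ScoredDerives.single (p := ⟨Sum.inl A', [], 1⟩) (mem_aug_del G hterm)
      · -- eps rule
        obtain rfl : G.start = A := hlhs
        refine ⟨0, by omega, ?_⟩
        simpa using ScoredDerives.single (p := ⟨Sum.inl G.start, [], 0⟩) (mem_aug_eps G heps)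

end GrammarLemmas
section MoreLemmas
variable {N T : Type*} (G : CNF N T)

theorem eps_sound : ∀ n, ∀ {A : N} {c : ℕ},
    DerN G.augProds [Sum.inl (Sum.inl A)] ([] : List ((N ⊕ Unit) ⊕ T)) c n →
    ∃ t, G.Derives A t ∧ t.length ≤ c := by
  intro n
  induction n using Nat.strong_induction_on with
  | _ n ih =>
    intro A c h
    rcases h.head with ⟨hv, -, -⟩ | ⟨p, hp, hlhs, c', n', d, hc, hn⟩
    · exact absurd hv (by simp)
    · rcases aug_classify G hp with ⟨A',B,C,hbin,rfl⟩ | ⟨A',a,hterm,rfl⟩ | ⟨heps,rfl⟩ |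
        ⟨A',y,hx,hy,rfl⟩ | ⟨x,rfl⟩ | ⟨A',rfl⟩ | ⟨A',rfl⟩ | rfl | ⟨A',x,hterm,rfl⟩
      · -- binary rule
        obtain rfl : A' = A := by injection hlhs
        have d' : DerN G.augProds
            ([Sum.inl (Sum.inl B)] ++ [Sum.inl (Sum.inl C)]) [] c' n' := d
        obtain ⟨v1, v2, c1, c2, n1, n2, hv, hcc, hnn, d1, d2⟩ := d'.split
        obtain ⟨rfl, rfl⟩ := List.append_eq_nil_iff.mp hv.symm
        obtain ⟨t1, ht1, hl1⟩ := ih n1 (by omega) d1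
        obtain ⟨t2, ht2, hl2⟩ := ih n2 (by omega) d2
        refine ⟨t1 ++ t2, derives_bin G hbin ht1 ht2, ?_⟩
        simp only [List.length_append]
        omega
      · -- terminal rule : impossible
        obtain rfl : A' = A := by injection hlhs
        have d' : DerN G.augProds (([a] : List T).map Sum.inr) [] c' n' := d
        have := d'.rigid.1
        simp at this
      · -- eps rule
        obtain rfl : G.start = A := by injection hlhs
        exact ⟨[], derives_eps_rule G heps, by simp⟩
      · -- substitution : impossible
        obtain rfl : A' = A := by injection hlhs
        have d' : DerN G.augProds (([y] : List T).map Sum.inr) [] c' n' := d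
        have := d'.rigid.1
        simp at this
      · -- insertion : lhs mismatch
        exact absurd hlhs (by simp)
      · -- A → IA : impossible, I cannot derive ε
        have d' : DerN G.augProds
            ([Sum.inl (Sum.inr ())] ++ [Sum.inl (Sum.inl A')]) [] c' n' := d
        obtain ⟨v1, v2, c1, c2, n1, n2, hv, -, -, d1, -⟩ := d'.split
        obtain ⟨rfl, rfl⟩ := List.append_eq_nil_iff.mp hv.symm
        exact absurd d1.toScored (I_not_eps G)
      · -- A → AI : impossible
        have d' : DerN G.augProds
            ([Sum.inl (Sum.inl A')] ++ [Sum.inl (Sum.inr ())]) [] c' n' := d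
        obtain ⟨v1, v2, c1, c2, n1, n2, hv, -, -, -, d2⟩ := d'.split
        obtain ⟨rfl, rfl⟩ := List.append_eq_nil_iff.mp hv.symm
        exact absurd d2.toScored (I_not_eps G)
      · -- I → II : lhs mismatch
        exact absurd hlhs (by simp)
      · -- deletion rule
        obtain rfl : A' = A := by injection hlhs
        have d' : DerN G.augProds (([] : List T).map Sum.inr) [] c' n' := d
        have hc' : c' = 0 := d'.rigid.2
        refine ⟨[x], derives_term G hterm, ?_⟩
        have hc2 : c = 1 + c' := by simpa using hc
        simp only [List.length_cons, List.length_nil]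
        omega

theorem cand_bounds {s : List T} {i j : ℕ} {X : N ⊕ Unit} {u : ℕ}
    (h : Cand G s i j X u) : 1 ≤ i ∧ i < j ∧ j ≤ s.length + 1 := by
  induction h with
  | base h1 h2 h3 h4 => exact ⟨h1, by omega, by omega⟩
  | comb h1 h2 h3 ih1 ih2 => omega
  | epsL h1 h2 h3 ih => omega
  | epsR h1 h2 h3 ih => omega

theorem subStr_len {s : List T} {i j : ℕ} (hi : 1 ≤ i) (hij : i ≤ j)
    (hj : j ≤ s.length + 1) : (subStr s i j).length = j - i := by
  simp only [subStr, List.length_take, List.length_drop]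
  omega

theorem subStr_single {s : List T} {i : ℕ} {a : T} (hi : 1 ≤ i)
    (h : s[i - 1]? = some a) : subStr s i (i + 1) = [a] := by
  have h1 : i + 1 - i = 1 := by omega
  obtain ⟨hlt, hval⟩ := List.getElem?_eq_some_iff.mp h
  simp only [subStr, h1]
  rw [List.drop_eq_getElem_cons hlt]
  simp [hval]

theorem subStr_append {s : List T} {i j k : ℕ} (hi : 1 ≤ i) (h1 : i ≤ j) (h2 : j ≤ k) :
    subStr s i k = subStr s i j ++ subStr s j k := by
  simp only [subStr]
  have e1 : j - 1 = (i - 1) + (j - i) := by omega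
  have e2 : k - i = (j - i) + (k - j) := by omega
  rw [e2, List.take_add, e1, ← List.drop_drop]

theorem subStr_take {s : List T} {i j k : ℕ} (hk : k ≤ j - i) :
    (subStr s i j).take k = subStr s i (i + k) := by
  simp only [subStr, List.take_take]
  rw [min_eq_left hk]
  congr 1
  omega

theorem subStr_drop {s : List T} {i j k : ℕ} (hi : 1 ≤ i) :
    (subStr s i j).drop k = subStr s (i + k) j := by
  simp only [subStr, List.drop_take]
  rw [List.drop_drop]
  congr 1
  · omega
  · congr 1
    omega

theorem cand_I : ∀ (d : ℕ) {s : List T} (i : ℕ), 1 ≤ i → i + d + 1 ≤ s.length + 1 →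
    Cand G s i (i + d + 1) (Sum.inr ()) (d + 1) := by
  intro d
  induction d with
  | zero =>
      intro s i hi hlen
      have hlt : i - 1 < s.length := by omega
      have hget : s[i - 1]? = some (s[i-1]) := by
        exact List.getElem?_eq_getElem hlt
      have hb2 : Cand G s i (i + 1) (Sum.inr ()) 1 :=
        Cand.base hi (by omega) hget (mem_aug_ins G _)
      simpa using hb2
  | succ d ihd =>
      intro s i hi hlen
      have h1 : Cand G s i (i + d + 1) (Sum.inr ()) (d + 1) := ihd i hi (by omega)
      have hlt : (i + d + 1) - 1 < s.length := by omega
      have hget : s[(i + d + 1) - 1]? = some (s[(i + d + 1) - 1]) := by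
        exact List.getElem?_eq_getElem hlt
      have h2 : Cand G s (i + d + 1) (i + d + 1 + 1) (Sum.inr ()) 1 :=
        Cand.base (by omega) (by omega) hget (mem_aug_ins G _)
      have h3 := Cand.comb h1 h2 (mem_aug_III G)
      have e1 : i + (d + 1) + 1 = i + d + 1 + 1 := by omega
      rw [e1]
      exact h3

theorem cand_I' {s : List T} {i j : ℕ} (hi : 1 ≤ i) (hij : i < j) (hj : j ≤ s.length + 1) :
    Cand G s i j (Sum.inr ()) (j - i) := by
  have h := cand_I G (j - i - 1) (s := s) i hi (by omega)
  have e1 : i + (j - i - 1) + 1 = j := by omega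
  have e2 : j - i - 1 + 1 = j - i := by omega
  rw [e1, e2] at h
  exact h

theorem cand_point {s : List T} {A : N} {a : T} (hterm : (A, a) ∈ G.term)
    {i j p : ℕ} (hi : 1 ≤ i) (hip : i ≤ p) (hpj : p < j) (hj : j ≤ s.length + 1)
    {b : T} (hb : s[p - 1]? = some b) :
    ∃ σ, ((A, b) ∈ G.term → σ = 0) ∧ σ ≤ 1 ∧ Cand G s i j (Sum.inl A) (j - i - 1 + σ) := by
  suffices h : ∀ σ, (⟨Sum.inl A, [Sum.inr b], σ⟩ : ScoredProd (N ⊕ Unit) T) ∈ G.augProds →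
      Cand G s i j (Sum.inl A) (j - i - 1 + σ) by
    by_cases hmem : (A, b) ∈ G.term
    · exact ⟨0, fun _ => rfl, by omega, h 0 (mem_aug_term G hmem)⟩
    · exact ⟨1, fun hcon => absurd hcon hmem, by omega, h 1 (mem_aug_subst G ⟨a, hterm⟩ hmem)⟩
  intro σ hmem
  have hbase : Cand G s p (p + 1) (Sum.inl A) σ := Cand.base (by omega) (by omega) hb hmem
  have hleft : Cand G s i (p + 1) (Sum.inl A) (p - i + σ) := by
    rcases Nat.lt_or_ge i p with hlt | hge
    · have hI := cand_I' G (s := s) hi hlt (by omega)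
      exact Cand.comb hI hbase (mem_aug_IA G A)
    · have e : i = p := by omega
      rw [e]
      have e2 : p - p + σ = σ := by omega
      rw [e2]
      exact hbase
  rcases Nat.lt_or_ge (p + 1) j with hlt | hge
  · have hI := cand_I' G (s := s) (by omega) hlt hj
    have h2 := Cand.comb hleft hI (mem_aug_AI G A)
    have e : p - i + σ + (j - (p + 1)) = j - i - 1 + σ := by omega
    rw [e] at h2
    exact h2
  · have e : j = p + 1 := by omega
    rw [e]
    have e2 : p + 1 - i - 1 + σ = p - i + σ := by omega
    rw [e2]
    exact hleft

end MoreLemmas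
section Complete
variable {N T : Type*} (G : CNF N T) [DecidableEq T]

theorem cand_complete (s : List T) : ∀ n : ℕ, ∀ {A : N} {t : List T} {c i j : ℕ},
    DerN G.prods [Sum.inl A] (t.map Sum.inr) c n →
    1 ≤ i → i < j → j ≤ s.length + 1 →
    ∃ u, Cand G s i j (Sum.inl A) u ∧ u ≤ editDist (subStr s i j) t := by
  intro n
  induction n using Nat.strong_induction_on with
  | _ n ih =>
    intro A t c i j h hi hij hj
    have hwlen : (subStr s i j).length = j - i := subStr_len hi (by omega) hj
    rcases h.head with ⟨hv, -, -⟩ | ⟨p, hp, hlhs, c', n', d, hc, hn⟩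
    · exfalso; cases t <;> simp at hv
    · rcases hp with ⟨A', B, C, hbin, rfl⟩ | ⟨A', a, hterm, rfl⟩ | ⟨heps, rfl⟩
      · -- binary rule A → BC
        obtain rfl : A' = A := hlhs
        have d0 : DerN G.prods ([Sum.inl B] ++ [Sum.inl C]) (t.map Sum.inr) c' n' := d
        obtain ⟨v1, v2, c1, c2, n1, n2, hv, hcc, hnn, d1, d2⟩ := d0.split
        obtain ⟨t1, t2, rfl, h1, h2⟩ := List.map_eq_append_iff.mp hv
        have d1' : DerN G.prods [Sum.inl B] (t1.map Sum.inr) c1 n1 := h1 ▸ d1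
        have d2' : DerN G.prods [Sum.inl C] (t2.map Sum.inr) c2 n2 := h2 ▸ d2
        obtain ⟨k, hk, hsplit⟩ := editDist_split t1 (subStr s i j) t2
        rcases Nat.eq_zero_or_pos k with rfl | hkpos
        · -- k = 0 : B covers ε, use epsL
          obtain ⟨v1', hv1le, e1⟩ := del_deriv G n1 d1'
          obtain ⟨u2, hu2c, hu2⟩ := ih n2 (by omega) d2' hi hij hj
          refine ⟨u2 + v1', Cand.epsL hu2c (mem_aug_bin G hbin) e1, ?_⟩
          simp only [List.take_zero, List.drop_zero] at hsplit
          rw [editDist_nil_left] at hsplit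
          omega
        · rcases Nat.lt_or_ge k (j - i) with hklt | hkge
          · -- 0 < k < j - i : both parts nonempty
            have hw1 : (subStr s i j).take k = subStr s i (i + k) := subStr_take (by omega)
            have hw2 : (subStr s i j).drop k = subStr s (i + k) j := subStr_drop hi
            obtain ⟨u1, hc1, hb1⟩ := ih n1 (by omega) (i := i) (j := i + k) d1' hi (by omega) (by omega)
            obtain ⟨u2, hc2, hb2⟩ := ih n2 (by omega) (i := i + k) (j := j) d2' (by omega) (by omega) hj
            refine ⟨u1 + u2, Cand.comb hc1 hc2 (mem_aug_bin G hbin), ?_⟩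
            rw [hw1, hw2] at hsplit
            omega
          · -- k = j - i : C covers ε, use epsR
            have htake : (subStr s i j).take k = subStr s i j :=
              List.take_of_length_le (by omega)
            have hdrop : (subStr s i j).drop k = [] :=
              List.drop_eq_nil_of_le (by omega)
            obtain ⟨u1, hc1, hb1⟩ := ih n1 (by omega) d1' hi hij hj
            obtain ⟨v2', hv2le, e2⟩ := del_deriv G n2 d2'
            refine ⟨u1 + v2', Cand.epsR hc1 (mem_aug_bin G hbin) e2, ?_⟩
            rw [htake, hdrop, editDist_nil_left] at hsplit
            omega
      · -- terminal rule A → a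
        obtain rfl : A' = A := hlhs
        have d0 : DerN G.prods (([a] : List T).map Sum.inr) (t.map Sum.inr) c' n' := d
        obtain rfl : t = [a] := List.map_injective_iff.mpr Sum.inr_injective d0.rigid.1
        by_cases hmem : a ∈ subStr s i j
        · obtain ⟨m, hm, hma⟩ := List.getElem_of_mem hmem
          have hmlt : m < j - i := by omega
          have hi1 : i - 1 + m < s.length := by omega
          have hgs : s[i + m - 1]? = some a := by
            have e : i + m - 1 = (i - 1) + m := by omega
            rw [e, List.getElem?_eq_getElem hi1]
            congr 1
            rw [← hma]
            simp only [subStr, List.getElem_take, List.getElem_drop]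
          obtain ⟨σ, hσ0, hσ1, hcand⟩ := cand_point G hterm hi (by omega : i ≤ i + m)
            (by omega : i + m < j) hj hgs
          have hσ : σ = 0 := hσ0 hterm
          refine ⟨j - i - 1 + σ, hcand, ?_⟩
          have hlb := length_le_editDist [a] (subStr s i j)
          simp only [List.length_cons, List.length_nil] at hlb
          omega
        · have hi1 : i - 1 < s.length := by omega
          have hgs : s[i - 1]? = some (s[i - 1]) := by
            exact List.getElem?_eq_getElem hi1
          obtain ⟨σ, hσ0, hσ1, hcand⟩ := cand_point G hterm hi (le_refl i) hij hj hgs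
          refine ⟨j - i - 1 + σ, hcand, ?_⟩
          have hlb := length_le_editDist_single (a := a) hmem
          omega
      · -- eps rule S → ε
        obtain rfl : G.start = A := hlhs
        have d0 : DerN G.prods (([] : List T).map Sum.inr) (t.map Sum.inr) c' n' := d
        obtain rfl : t = [] := List.map_injective_iff.mpr Sum.inr_injective d0.rigid.1
        have hI := cand_I' G (s := s) hi hij hj
        have heps2 : ScoredDerives G.augProds [Sum.inl (Sum.inl G.start)] [] 0 := by
          simpa using ScoredDerives.single (p := ⟨Sum.inl G.start, [], 0⟩) (mem_aug_eps G heps)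
        refine ⟨j - i + 0, Cand.epsR hI (mem_aug_IA G G.start) heps2, ?_⟩
        rw [editDist_nil_right]
        omega

end Complete
section Soundness
variable {N T : Type*} (G : CNF N T) [DecidableEq T]

theorem cand_sound (s : List T) {i j : ℕ} {X : N ⊕ Unit} {u : ℕ}
    (h : Cand G s i j X u) :
    (∀ A : N, X = Sum.inl A → ∃ t, G.Derives A t ∧ editDist (subStr s i j) t ≤ u) ∧
    (X = Sum.inr () → (subStr s i j).length ≤ u) := by
  induction h with
  | @base i X σ a h1 h2 h3 h4 =>
      have hss : subStr s i (i + 1) = [a] := subStr_single h1 h3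
      rcases aug_classify G h4 with ⟨A',B,C,hbin,heq⟩ | ⟨A',b,hterm,heq⟩ | ⟨heps,heq⟩ |
        ⟨A',y,hx,hy,heq⟩ | ⟨x,heq⟩ | ⟨A',heq⟩ | ⟨A',heq⟩ | heq | ⟨A',x,hterm,heq⟩
      · exact absurd heq (by simp)
      · -- matched terminal
        simp only [ScoredProd.mk.injEq, List.cons.injEq, Sum.inr.injEq, and_true] at heq
        obtain ⟨hX, hab, hσ⟩ := heq
        subst hX; subst hσ
        obtain rfl : b = a := hab.symm
        constructor
        · intro A0 hA0
          obtain rfl : A' = A0 := by injection hA0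
          refine ⟨[b], derives_term G hterm, ?_⟩
          rw [hss, editDist_single_single_self]
        · intro hcon; exact absurd hcon (by simp)
      · exact absurd heq (by simp)
      · -- substitution
        simp only [ScoredProd.mk.injEq, List.cons.injEq, Sum.inr.injEq, and_true] at heq
        obtain ⟨hX, hay, hσ⟩ := heq
        subst hX; subst hσ
        obtain ⟨x0, hx0⟩ := hx
        constructor
        · intro A0 hA0
          obtain rfl : A' = A0 := by injection hA0
          refine ⟨[x0], derives_term G hx0, ?_⟩
          rw [hss]
          exact editDist_single_single_le a x0
        · intro hcon; exact absurd hcon (by simp)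
      · -- insertion
        simp only [ScoredProd.mk.injEq, List.cons.injEq, Sum.inr.injEq, and_true] at heq
        obtain ⟨hX, hax, hσ⟩ := heq
        subst hX; subst hσ
        constructor
        · intro A0 hA0; exact absurd hA0 (by simp)
        · intro _; rw [hss]; simp
      · exact absurd heq (by simp)
      · exact absurd heq (by simp)
      · exact absurd heq (by simp)
      · exact absurd heq (by simp)
  | @comb i j k X B C u v sc hB hC hmem ihB ihC =>
      obtain ⟨hi1, hij1, hj1⟩ := cand_bounds G hB
      obtain ⟨hi2, hjk2, hk2⟩ := cand_bounds G hC
      have hsa : subStr s i k = subStr s i j ++ subStr s j k :=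
        subStr_append hi1 (by omega) (by omega)
      rcases aug_classify G hmem with ⟨A',B',C',hbin,heq⟩ | ⟨A',b,hterm,heq⟩ | ⟨heps,heq⟩ |
        ⟨A',y,hx,hy,heq⟩ | ⟨x,heq⟩ | ⟨A',heq⟩ | ⟨A',heq⟩ | heq | ⟨A',x,hterm,heq⟩
      · -- lifted binary
        simp only [ScoredProd.mk.injEq, List.cons.injEq, Sum.inl.injEq, and_true] at heq
        obtain ⟨hX, ⟨hBeq, hCeq⟩, -⟩ := heq
        subst hX; subst hBeq; subst hCeq
        obtain ⟨t1, hd1, he1⟩ := ihB.1 B' rfl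
        obtain ⟨t2, hd2, he2⟩ := ihC.1 C' rfl
        constructor
        · intro A0 hA0
          obtain rfl : A' = A0 := by injection hA0
          refine ⟨t1 ++ t2, derives_bin G hbin hd1 hd2, ?_⟩
          rw [hsa]
          have h3 := editDist_append_le (subStr s i j) (subStr s j k) t1 t2
          omega
        · intro hcon; exact absurd hcon (by simp)
      · exact absurd heq (by simp)
      · exact absurd heq (by simp)
      · exact absurd heq (by simp)
      · exact absurd heq (by simp)
      · -- A → IA
        simp only [ScoredProd.mk.injEq, List.cons.injEq, Sum.inl.injEq, and_true] at heq
        obtain ⟨hX, ⟨hBeq, hCeq⟩, -⟩ := heq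
        subst hX; subst hBeq; subst hCeq
        have h1 := ihB.2 rfl
        obtain ⟨t2, hd2, he2⟩ := ihC.1 A' rfl
        constructor
        · intro A0 hA0
          obtain rfl : A' = A0 := by injection hA0
          refine ⟨t2, hd2, ?_⟩
          rw [hsa]
          have h3 := editDist_append_le (subStr s i j) (subStr s j k) [] t2
          simp only [List.nil_append] at h3
          rw [editDist_nil_right] at h3
          omega
        · intro hcon; exact absurd hcon (by simp)
      · -- A → AI
        simp only [ScoredProd.mk.injEq, List.cons.injEq, Sum.inl.injEq, and_true] at heq
        obtain ⟨hX, ⟨hBeq, hCeq⟩, -⟩ := heq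
        subst hX; subst hBeq; subst hCeq
        obtain ⟨t1, hd1, he1⟩ := ihB.1 A' rfl
        have h2 := ihC.2 rfl
        constructor
        · intro A0 hA0
          obtain rfl : A' = A0 := by injection hA0
          refine ⟨t1, hd1, ?_⟩
          rw [hsa]
          have h3 := editDist_append_le (subStr s i j) (subStr s j k) t1 []
          simp only [List.append_nil] at h3
          rw [editDist_nil_right] at h3
          omega
        · intro hcon; exact absurd hcon (by simp)
      · -- I → II
        simp only [ScoredProd.mk.injEq, List.cons.injEq, Sum.inl.injEq, and_true] at heq
        obtain ⟨hX, ⟨hBeq, hCeq⟩, -⟩ := heq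
        subst hX; subst hBeq; subst hCeq
        constructor
        · intro A0 hA0; exact absurd hA0 (by simp)
        · intro _
          rw [hsa, List.length_append]
          have := ihB.2 rfl
          have := ihC.2 rfl
          omega
      · exact absurd heq (by simp)
  | @epsL i j X B C u v sc hB hmem heps ih =>
      rcases aug_classify G hmem with ⟨A',B',C',hbin,heq⟩ | ⟨A',b,hterm,heq⟩ | ⟨heps2,heq⟩ |
        ⟨A',y,hx,hy,heq⟩ | ⟨x,heq⟩ | ⟨A',heq⟩ | ⟨A',heq⟩ | heq | ⟨A',x,hterm,heq⟩
      · -- lifted binary, rule X → C B with C = B', B = C'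
        simp only [ScoredProd.mk.injEq, List.cons.injEq, Sum.inl.injEq, and_true] at heq
        obtain ⟨hX, ⟨hCeq, hBeq⟩, -⟩ := heq
        subst hX; subst hBeq; subst hCeq
        obtain ⟨nn, hdN⟩ := heps.toDerN
        obtain ⟨t1, hd1, hl1⟩ := eps_sound G nn hdN
        obtain ⟨t2, hd2, he2⟩ := ih.1 C' rfl
        constructor
        · intro A0 hA0
          obtain rfl : A' = A0 := by injection hA0
          refine ⟨t1 ++ t2, derives_bin G hbin hd1 hd2, ?_⟩
          have h3 := editDist_append_le [] (subStr s i j) t1 t2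
          simp only [List.nil_append] at h3
          rw [editDist_nil_left] at h3
          omega
        · intro hcon; exact absurd hcon (by simp)
      · exact absurd heq (by simp)
      · exact absurd heq (by simp)
      · exact absurd heq (by simp)
      · exact absurd heq (by simp)
      · -- A → IA : C = I, impossible since I cannot derive ε
        simp only [ScoredProd.mk.injEq, List.cons.injEq, Sum.inl.injEq, and_true] at heq
        obtain ⟨hX, ⟨hCeq, hBeq⟩, -⟩ := heq
        subst hCeq
        exact absurd heps (I_not_eps G)
      · -- A → AI : C = A', B = I
        simp only [ScoredProd.mk.injEq, List.cons.injEq, Sum.inl.injEq, and_true] at heq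
        obtain ⟨hX, ⟨hCeq, hBeq⟩, -⟩ := heq
        subst hX; subst hBeq; subst hCeq
        have h1 := ih.2 rfl
        obtain ⟨nn, hdN⟩ := heps.toDerN
        obtain ⟨t1, hd1, hl1⟩ := eps_sound G nn hdN
        constructor
        · intro A0 hA0
          obtain rfl : A' = A0 := by injection hA0
          refine ⟨t1, hd1, ?_⟩
          have h3 := editDist_append_le (subStr s i j) [] [] t1
          simp only [List.append_nil, List.nil_append] at h3
          rw [editDist_nil_right, editDist_nil_left] at h3
          omega
        · intro hcon; exact absurd hcon (by simp)
      · -- I → II : C = I impossible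
        simp only [ScoredProd.mk.injEq, List.cons.injEq, Sum.inl.injEq, and_true] at heq
        obtain ⟨hX, ⟨hCeq, hBeq⟩, -⟩ := heq
        subst hCeq
        exact absurd heps (I_not_eps G)
      · exact absurd heq (by simp)
  | @epsR i j X B C u v sc hB hmem heps ih =>
      rcases aug_classify G hmem with ⟨A',B',C',hbin,heq⟩ | ⟨A',b,hterm,heq⟩ | ⟨heps2,heq⟩ |
        ⟨A',y,hx,hy,heq⟩ | ⟨x,heq⟩ | ⟨A',heq⟩ | ⟨A',heq⟩ | heq | ⟨A',x,hterm,heq⟩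
      · -- lifted binary, rule X → B C
        simp only [ScoredProd.mk.injEq, List.cons.injEq, Sum.inl.injEq, and_true] at heq
        obtain ⟨hX, ⟨hBeq, hCeq⟩, -⟩ := heq
        subst hX; subst hBeq; subst hCeq
        obtain ⟨t1, hd1, he1⟩ := ih.1 B' rfl
        obtain ⟨nn, hdN⟩ := heps.toDerN
        obtain ⟨t2, hd2, hl2⟩ := eps_sound G nn hdN
        constructor
        · intro A0 hA0
          obtain rfl : A' = A0 := by injection hA0
          refine ⟨t1 ++ t2, derives_bin G hbin hd1 hd2, ?_⟩
          have h3 := editDist_append_le (subStr s i j) [] t1 t2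
          simp only [List.append_nil] at h3
          rw [editDist_nil_left] at h3
          omega
        · intro hcon; exact absurd hcon (by simp)
      · exact absurd heq (by simp)
      · exact absurd heq (by simp)
      · exact absurd heq (by simp)
      · exact absurd heq (by simp)
      · -- A → IA : B = I, C = A'
        simp only [ScoredProd.mk.injEq, List.cons.injEq, Sum.inl.injEq, and_true] at heq
        obtain ⟨hX, ⟨hBeq, hCeq⟩, -⟩ := heq
        subst hX; subst hBeq; subst hCeq
        have h1 := ih.2 rfl
        obtain ⟨nn, hdN⟩ := heps.toDerN
        obtain ⟨t2, hd2, hl2⟩ := eps_sound G nn hdN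
        constructor
        · intro A0 hA0
          obtain rfl : A' = A0 := by injection hA0
          refine ⟨t2, hd2, ?_⟩
          have h3 := editDist_append_le (subStr s i j) [] [] t2
          simp only [List.append_nil, List.nil_append] at h3
          rw [editDist_nil_right, editDist_nil_left] at h3
          omega
        · intro hcon; exact absurd hcon (by simp)
      · -- A → AI : C = I impossible
        simp only [ScoredProd.mk.injEq, List.cons.injEq, Sum.inl.injEq, and_true] at heq
        obtain ⟨hX, ⟨hBeq, hCeq⟩, -⟩ := heq
        subst hCeq
        exact absurd heps (I_not_eps G)
      · -- I → II : C = I impossible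
        simp only [ScoredProd.mk.injEq, List.cons.injEq, Sum.inl.injEq, and_true] at heq
        obtain ⟨hX, ⟨hBeq, hCeq⟩, -⟩ := heq
        subst hCeq
        exact absurd heps (I_not_eps G)
      · exact absurd heq (by simp)

end Soundness
/-- For all `1 ≤ i < j ≤ n+1` and every nonterminal `A` of `G`: some pair
`(A, u)` belongs to `M(i,j)` iff there exists a string `t' ∈ Σ*` with `A ⇒* t'` in `G`
and `d_ed(s_i^{j-1}, t') ≤ R`. -/
theorem Mmat_mem_iff_editDist_le {N T : Type*} [DecidableEq T]
    (G : CNF N T) (hne : G.lang.Nonempty) (s : List T) (R : ℕ) (hR : 1 ≤ R)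
    (i j : ℕ) (hi : 1 ≤ i) (hij : i < j) (hj : j ≤ s.length + 1) (A : N) :
    (∃ u, (Sum.inl A, u) ∈ Mmat G s R i j) ↔
      ∃ t', G.Derives A t' ∧ editDist (subStr s i j) t' ≤ R := by
  constructor
  · rintro ⟨u, hcand, huR, -⟩
    obtain ⟨t, hd, hle⟩ := (cand_sound G s hcand).1 A rfl
    exact ⟨t, hd, le_trans hle huR⟩
  · rintro ⟨t, hd, hle⟩
    obtain ⟨c, hder⟩ := hd
    obtain ⟨n, hN⟩ := hder.toDerN
    obtain ⟨u, hC, hu⟩ := cand_complete G s n hN hi hij hj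
    have hne2 : {v | Cand G s i j (Sum.inl A) v}.Nonempty := ⟨u, hC⟩
    refine ⟨sInf {v | Cand G s i j (Sum.inl A) v}, Nat.sInf_mem hne2, ?_, ?_⟩
    · exact le_trans (Nat.sInf_le hC) (le_trans hu hle)
    · intro v hv
      exact Nat.sInf_le hv
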